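/- Let x : [0,T] → ℝⁿ be differentiable, a : [0,T] → ℝ positive differentiable with a' ≥ 0, and suppose for each coordinate i, x_i'(t) ≤ (a'(t)/(2a(t)))·(1 − x_i(t)) with x_i(0) = 0. Then for all t ∈ [0,T], 1 − x_i(t) ≥ √(a(0)/a(t)) > 0. -/

import Mathlib

/-- Grönwall-type feasibility estimate for continuous-time Frank–Wolfe. -/
theorem stmt_3 {n : ℕ} (T : ℝ) (hT : 0 ≤ T)
    (x : ℝ → (Fin n → ℝ)) (x' : ℝ → (Fin n → ℝ)) (a a' : ℝ → ℝ)
    (hx : ∀ i : Fin n, ∀ t ∈ Set.Icc 0 T, HasDerivAt (fun s => x s i) (x' t i) t)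
    (ha : ∀ t ∈ Set.Icc 0 T, HasDerivAt a (a' t) t)
    (hapos : ∀ t ∈ Set.Icc 0 T, 0 < a t)
    (ha' : ∀ t ∈ Set.Icc 0 T, 0 ≤ a' t)
    (hineq : ∀ i : Fin n, ∀ t ∈ Set.Icc 0 T, x' t i ≤ a' t / (2 * a t) * (1 - x t i))
    (hx0 : ∀ i : Fin n, x 0 i = 0) :
    ∀ i : Fin n, ∀ t ∈ Set.Icc 0 T,
      1 - x t i ≥ Real.sqrt (a 0 / a t) ∧ 0 < Real.sqrt (a 0 / a t) := by
  intro i t ht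
  have h0mem : (0:ℝ) ∈ Set.Icc 0 T := ⟨le_refl 0, hT⟩
  have hat := hapos t ht
  have ha0pos := hapos 0 h0mem
  have hsqrtpos : 0 < Real.sqrt (a 0 / a t) := Real.sqrt_pos.mpr (div_pos ha0pos hat)
  refine ⟨?_, hsqrtpos⟩
  set g : ℝ → ℝ := fun s => (1 - x s i) * Real.sqrt (a s) with hgdef
  have hg' : ∀ s ∈ Set.Icc 0 T, HasDerivAt g
      (-(x' s i) * Real.sqrt (a s) + (1 - x s i) * (a' s / (2 * Real.sqrt (a s)))) s := by
    intro s hs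
    have h1 : HasDerivAt (fun u => 1 - x u i) (-(x' s i)) s := by
      simpa using (hx i s hs).const_sub 1
    have h2 : HasDerivAt (fun u => Real.sqrt (a u)) (a' s / (2 * Real.sqrt (a s))) s :=
      (ha s hs).sqrt (ne_of_gt (hapos s hs))
    exact h1.mul h2
  have hg'nonneg : ∀ s ∈ Set.Icc 0 T,
      0 ≤ -(x' s i) * Real.sqrt (a s) + (1 - x s i) * (a' s / (2 * Real.sqrt (a s))) := by
    intro s hs
    have has := hapos s hs
    have hsq : 0 < Real.sqrt (a s) := Real.sqrt_pos.mpr has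
    have hmul : Real.sqrt (a s) * Real.sqrt (a s) = a s := Real.mul_self_sqrt has.le
    have h := mul_le_mul_of_nonneg_right (hineq i s hs) hsq.le
    have heq : a' s / (2 * a s) * (1 - x s i) * Real.sqrt (a s)
        = (1 - x s i) * (a' s / (2 * Real.sqrt (a s))) := by
      field_simp
      linear_combination a' s * (1 - x s i) * hmul
    linarith [heq ▸ h]
  have hmono : MonotoneOn g (Set.Icc 0 T) := by
    apply monotoneOn_of_hasDerivWithinAt_nonneg (convex_Icc 0 T)
      (f' := fun s => -(x' s i) * Real.sqrt (a s) + (1 - x s i) * (a' s / (2 * Real.sqrt (a s))))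
    · intro s hs
      exact ((hg' s hs).continuousAt).continuousWithinAt
    · intro s hs
      exact ((hg' s (interior_subset hs)).hasDerivWithinAt)
    · intro s hs
      exact hg'nonneg s (interior_subset hs)
  have hgt : g 0 ≤ g t := hmono h0mem ht ht.1
  have hg0 : g 0 = Real.sqrt (a 0) := by simp [hgdef, hx0 i]
  have key : Real.sqrt (a 0) ≤ (1 - x t i) * Real.sqrt (a t) := by
    rw [← hg0]; exact hgt
  have hsqt : 0 < Real.sqrt (a t) := Real.sqrt_pos.mpr hat
  rw [ge_iff_le, Real.sqrt_div (le_of_lt ha0pos)]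
  exact (div_le_iff₀ hsqt).mpr key
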